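/- arXiv:2403.08751 — 5 statements merged into one kernel-verified Lean document; each statement's English description precedes it below -/
import Mathlib

section
/- For every integer k ≥ 2, 2^{d−1} < Φ_k(2) < 2^{d+1}, where d = deg(Φ_k) = φ(k). -/
open Polynomial Finset ArithmeticFunction
open scoped ArithmeticFunction ArithmeticFunction.Moebius ArithmeticFunction.Omega



lemma cyc_eval_prod (n : ℕ) (hn : 0 < n) :
    (((cyclotomic n ℤ).eval 2 : ℤ) : ℚ) =
      ∏ s ∈ n.divisors, ((2:ℚ) ^ (n / s) - 1) ^ (μ s) := by
  have key := (prod_eq_iff_prod_pow_moebius_eq_of_nonzero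
    (R := ℚ) (f := fun i => (((cyclotomic i ℤ).eval 2 : ℤ) : ℚ))
    (g := fun i => (2:ℚ) ^ i - 1) ?_ ?_).mp ?_ n hn
  · rw [← key, Nat.prod_divisorsAntidiagonal (fun i j => ((2:ℚ)^j - 1) ^ (μ i))]
  · intro i hi
    have := cyclotomic_pos' i (R := ℤ) (x := 2) (by norm_num)
    positivity
  · intro i hi
    have : (1:ℚ) < 2 ^ i := one_lt_pow₀ (by norm_num) hi.ne'
    intro h
    simp only [sub_eq_zero] at h
    rw [← h] at this
    exact lt_irrefl _ this
  · intro i hi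
    have := prod_cyclotomic_eq_X_pow_sub_one hi ℤ
    have h2 := congrArg (fun q => ((Polynomial.eval 2 q : ℤ) : ℚ)) this
    simpa [eval_prod] using h2

lemma totient_moebius (n : ℕ) (hn : 0 < n) :
    ((n.totient : ℤ)) = ∑ s ∈ n.divisors, (μ s : ℤ) * (n / s : ℕ) := by
  have key := (sum_eq_iff_sum_mul_moebius_eq (R := ℤ)
    (f := fun i => (i.totient : ℤ)) (g := fun i => (i : ℤ))).mp ?_ n hn
  · rw [← key, ← Nat.sum_divisorsAntidiagonal (fun i j => (μ i : ℤ) * (j : ℕ))]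
    push_cast
    rfl
  · intro i hi
    have := Nat.sum_totient i
    exact_mod_cast congrArg (fun t : ℕ => (t : ℤ)) this

lemma filter_image (n p : ℕ) (hn : 0 < n) (hp : p.Prime) (hpn : p ∣ n) :
    n.divisors.filter (fun s => Squarefree s ∧ p ∣ s)
      = (n.divisors.filter (fun s => Squarefree s ∧ ¬ p ∣ s)).image (fun s => p * s) := by
  ext t
  simp only [Finset.mem_image, Finset.mem_filter, Nat.mem_divisors]
  constructor
  · rintro ⟨⟨htn, _⟩, hsq, hpt⟩
    obtain ⟨s, rfl⟩ := hpt
    refine ⟨s, ⟨⟨dvd_trans (dvd_mul_left s p) htn, hn.ne'⟩,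
      hsq.squarefree_of_dvd (dvd_mul_left s p), ?_⟩, rfl⟩
    rintro ⟨u, rfl⟩
    exact (Nat.Prime.one_lt hp).ne'
      (Nat.isUnit_iff.mp (hsq p ⟨u, by ring⟩))
  · rintro ⟨s, ⟨⟨hsn, _⟩, hsq, hps⟩, rfl⟩
    have hcop : Nat.Coprime p s := (Nat.Prime.coprime_iff_not_dvd hp).mpr hps
    refine ⟨⟨Nat.Coprime.mul_dvd_of_dvd_of_dvd hcop hpn hsn, hn.ne'⟩, ?_, dvd_mul_right p s⟩
    exact (Nat.squarefree_mul hcop).mpr ⟨hp.squarefree, hsq⟩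

lemma prod_pair {M : Type*} [CommMonoid M] (n p : ℕ) (hn : 0 < n) (hp : p.Prime)
    (hpn : p ∣ n) (G : ℕ → M) (hG : ∀ s, ¬ Squarefree s → G s = 1) :
    ∏ s ∈ n.divisors, G s
      = ∏ s ∈ n.divisors.filter (fun s => Squarefree s ∧ ¬ p ∣ s), (G s * G (p * s)) := by
  rw [Finset.prod_mul_distrib, ← Finset.prod_image
    (f := G) (g := fun s => p * s)
    (fun x _ y _ h => mul_left_cancel₀ hp.pos.ne' h),
    ← filter_image n p hn hp hpn]
  have h1 : ∏ s ∈ n.divisors, G s = ∏ s ∈ n.divisors.filter Squarefree, G s := by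
    refine (Finset.prod_subset (Finset.filter_subset _ _) ?_).symm
    intro x hx hx2
    exact hG x (by simpa [Finset.mem_filter, (Nat.mem_divisors.mp hx)] using hx2)
  rw [h1, ← Finset.prod_filter_mul_prod_filter_not (n.divisors.filter Squarefree)
    (fun s => ¬ p ∣ s) G, Finset.filter_filter, Finset.filter_filter]
  congr 2
  ext s; simp [not_not]

lemma sum_pair (n p : ℕ) (hn : 0 < n) (hp : p.Prime)
    (hpn : p ∣ n) (G : ℕ → ℤ) (hG : ∀ s, ¬ Squarefree s → G s = 0) :
    ∑ s ∈ n.divisors, G s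
      = ∑ s ∈ n.divisors.filter (fun s => Squarefree s ∧ ¬ p ∣ s), (G s + G (p * s)) := by
  rw [Finset.sum_add_distrib, ← Finset.sum_image
    (f := G) (g := fun s => p * s)
    (fun x _ y _ h => mul_left_cancel₀ hp.pos.ne' h),
    ← filter_image n p hn hp hpn]
  have h1 : ∑ s ∈ n.divisors, G s = ∑ s ∈ n.divisors.filter Squarefree, G s := by
    refine (Finset.sum_subset (Finset.filter_subset _ _) ?_).symm
    intro x hx hx2
    exact hG x (by simpa [Finset.mem_filter, (Nat.mem_divisors.mp hx)] using hx2)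
  rw [h1, ← Finset.sum_filter_add_sum_filter_not (n.divisors.filter Squarefree)
    (fun s => ¬ p ∣ s) G, Finset.filter_filter, Finset.filter_filter]
  congr 2
  ext s; simp [not_not]

noncomputable def wq (p e : ℕ) : ℚ := (1 - (1/2:ℚ)^(p*e)) / (1 - (1/2:ℚ)^e)

lemma half_pow_lt_one {e : ℕ} (he : 1 ≤ e) : (1/2:ℚ)^e < 1 :=
  pow_lt_one₀ (by norm_num) (by norm_num) (by omega)

lemma one_sub_pos {e : ℕ} (he : 1 ≤ e) : 0 < 1 - (1/2:ℚ)^e := by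
  linarith [half_pow_lt_one he]

lemma wq_pos {p e : ℕ} (hp : 1 ≤ p) (he : 1 ≤ e) : 0 < wq p e :=
  div_pos (one_sub_pos (by nlinarith)) (one_sub_pos he)

lemma wq_gt_one {p e : ℕ} (hp : 2 ≤ p) (he : 1 ≤ e) : 1 < wq p e := by
  have h1 : (1/2:ℚ)^(p*e) < (1/2:ℚ)^e := by
    apply pow_lt_pow_right_of_lt_one₀ (by norm_num) (by norm_num)
    nlinarith
  rw [wq, lt_div_iff₀ (one_sub_pos he)]
  linarith

-- geometric sum over Ioc
lemma geom_Ioc (k N : ℕ) (h : k ≤ N) :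
    ∑ e ∈ Finset.Ioc k N, (1/2:ℚ)^e = (1/2:ℚ)^k - (1/2:ℚ)^N := by
  induction N, h using Nat.le_induction with
  | base => simp
  | succ N hN ih =>
    rw [Finset.sum_Ioc_succ_top hN, ih]
    ring

lemma sum_pow_lt (k : ℕ) (E : Finset ℕ) (hE : ∀ e ∈ E, k < e) :
    ∑ e ∈ E, (1/2:ℚ)^e < (1/2:ℚ)^k := by
  set N := (E.sup _root_.id) ⊔ k with hN
  have hsub : E ⊆ Finset.Ioc k N := by
    intro e he
    rw [Finset.mem_Ioc]
    exact ⟨hE e he, le_sup_of_le_left (Finset.le_sup (f := _root_.id) he)⟩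
  calc ∑ e ∈ E, (1/2:ℚ)^e ≤ ∑ e ∈ Finset.Ioc k N, (1/2:ℚ)^e :=
        Finset.sum_le_sum_of_subset_of_nonneg hsub (fun i _ _ => by positivity)
    _ = (1/2:ℚ)^k - (1/2:ℚ)^N := geom_Ioc k N le_sup_right
    _ < (1/2:ℚ)^k := by
        have : (0:ℚ) < (1/2:ℚ)^N := by positivity
        linarith

lemma weierstrass (E : Finset ℕ) (f : ℕ → ℚ) (h0 : ∀ e ∈ E, 0 ≤ f e)
    (h1 : ∀ e ∈ E, f e ≤ 1) : 1 - ∑ e ∈ E, f e ≤ ∏ e ∈ E, (1 - f e) := by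
  induction E using Finset.cons_induction with
  | empty => simp
  | cons a s ha ih =>
    rw [Finset.prod_cons, Finset.sum_cons]
    have hs0 := fun e he => h0 e (Finset.mem_cons_of_mem he)
    have hs1 := fun e he => h1 e (Finset.mem_cons_of_mem he)
    have ihs := ih hs0 hs1
    have ha0 := h0 a (Finset.mem_cons_self a s)
    have ha1 := h1 a (Finset.mem_cons_self a s)
    have hsum : (0:ℚ) ≤ ∑ e ∈ s, f e := Finset.sum_nonneg hs0
    nlinarith [Finset.prod_nonneg (fun e (he : e ∈ s) => by linarith [hs1 e he] : ∀ e ∈ s, (0:ℚ) ≤ 1 - f e)]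

lemma prod_wq_lt_aux (p : ℕ) (hp : 2 ≤ p) (k : ℕ) (hk : 1 ≤ k) (E : Finset ℕ)
    (hE : ∀ e ∈ E, k < e) : ∏ e ∈ E, wq p e < 1 / (1 - (1/2:ℚ)^k) := by
  have he1 : ∀ e ∈ E, 1 ≤ e := fun e he => by have := hE e he; omega
  have hnum : ∏ e ∈ E, (1 - (1/2:ℚ)^(p*e)) ≤ 1 := by
    apply Finset.prod_le_one
    · intro e he
      exact le_of_lt (one_sub_pos (by nlinarith [he1 e he]))
    · intro e he
      have : (0:ℚ) ≤ (1/2:ℚ)^(p*e) := by positivity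
      linarith
  have hden : 1 - (1/2:ℚ)^k < ∏ e ∈ E, (1 - (1/2:ℚ)^e) := by
    calc 1 - (1/2:ℚ)^k < 1 - ∑ e ∈ E, (1/2:ℚ)^e := by
          linarith [sum_pow_lt k E hE]
      _ ≤ ∏ e ∈ E, (1 - (1/2:ℚ)^e) := by
          apply weierstrass
          · intro e _; positivity
          · intro e he
            have := half_pow_lt_one (he1 e he); linarith
  have hkpos := one_sub_pos hk
  have hdenpos : 0 < ∏ e ∈ E, (1 - (1/2:ℚ)^e) := lt_trans hkpos hden
  have : ∏ e ∈ E, wq p e = (∏ e ∈ E, (1 - (1/2:ℚ)^(p*e))) / ∏ e ∈ E, (1 - (1/2:ℚ)^e) := by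
    rw [← Finset.prod_div_distrib]; rfl
  rw [this]
  calc (∏ e ∈ E, (1 - (1/2:ℚ)^(p*e))) / ∏ e ∈ E, (1 - (1/2:ℚ)^e)
      ≤ 1 / ∏ e ∈ E, (1 - (1/2:ℚ)^e) := by
        gcongr
    _ < 1 / (1 - (1/2:ℚ)^k) := one_div_lt_one_div_of_lt hkpos hden

lemma prod_wq_lt_two (p : ℕ) (hp : 2 ≤ p) (E : Finset ℕ) (h0 : 0 ∉ E)
    (h1 : ∀ e ∈ E, e ≠ 1 → 1 ∈ E → p < e) : ∏ e ∈ E, wq p e < 2 := by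
  by_cases h : 1 ∈ E
  · rw [← Finset.insert_erase h, Finset.prod_insert (Finset.notMem_erase _ _)]
    have hE' : ∀ e ∈ E.erase 1, p < e := fun e he =>
      h1 e (Finset.mem_of_mem_erase he) (Finset.ne_of_mem_erase he) h
    have haux := prod_wq_lt_aux p hp p (by omega) (E.erase 1) hE'
    have hppos := one_sub_pos (le_trans one_le_two hp)
    have hw1 : wq p 1 = 2 * (1 - (1/2:ℚ)^p) := by
      rw [wq, mul_one]
      rw [div_eq_iff (by norm_num : (1:ℚ) - (1/2)^1 ≠ 0)]
      ring
    have hw1pos : 0 < wq p 1 := wq_pos (by omega) le_rfl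
    calc wq p 1 * ∏ e ∈ E.erase 1, wq p e
        < wq p 1 * (1 / (1 - (1/2:ℚ)^p)) := by
          exact mul_lt_mul_of_pos_left haux hw1pos
      _ = 2 := by
          rw [hw1]
          rw [mul_one_div, mul_div_assoc, div_self hppos.ne', mul_one]
  · have hE' : ∀ e ∈ E, 1 < e := fun e he => by
      have h0' : e ≠ 0 := fun h' => h0 (h' ▸ he)
      have h1' : e ≠ 1 := fun h' => h (h' ▸ he)
      omega
    have := prod_wq_lt_aux p hp 1 le_rfl E hE'
    norm_num at this
    exact this


lemma prod_zpow_two (A : Finset ℕ) (c : ℕ → ℤ) :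
    ∏ s ∈ A, (2:ℚ) ^ (c s) = 2 ^ (∑ s ∈ A, c s) := by
  induction A using Finset.cons_induction with
  | empty => simp
  | cons a s ha ih => rw [Finset.prod_cons, Finset.sum_cons, ih, zpow_add₀ (by norm_num : (2:ℚ) ≠ 0)]

lemma moebius_pm {s : ℕ} (hs : Squarefree s) : μ s = 1 ∨ μ s = -1 := by
  rw [moebius_apply_of_squarefree hs]
  rcases Nat.even_or_odd (Ω s) with h | h
  · exact Or.inl (Even.neg_one_pow h)
  · exact Or.inr (Odd.neg_one_pow h)

theorem main_bound (n : ℕ) (hn : 2 ≤ n) :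
    (1/2 : ℚ) * 2 ^ n.totient < (((cyclotomic n ℤ).eval 2 : ℤ) : ℚ) ∧
      (((cyclotomic n ℤ).eval 2 : ℤ) : ℚ) < 2 * 2 ^ n.totient := by
  have hn0 : 0 < n := by omega
  set p := n.minFac with hpdef
  have hp : p.Prime := Nat.minFac_prime (by omega)
  have hp2 : 2 ≤ p := hp.two_le
  have hpn : p ∣ n := Nat.minFac_dvd n
  set A := n.divisors.filter (fun s => Squarefree s ∧ ¬ p ∣ s) with hA
  -- basic facts about elements of A
  have hmem : ∀ s ∈ A, s ∣ n ∧ Squarefree s ∧ ¬ p ∣ s := by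
    intro s hs
    simp only [hA, Finset.mem_filter, Nat.mem_divisors] at hs
    exact ⟨hs.1.1, hs.2.1, hs.2.2⟩
  have hps : ∀ s ∈ A, p * s ∣ n := by
    intro s hs
    obtain ⟨hsn, _, hnps⟩ := hmem s hs
    exact Nat.Coprime.mul_dvd_of_dvd_of_dvd ((Nat.Prime.coprime_iff_not_dvd hp).mpr hnps) hpn hsn
  set e : ℕ → ℕ := fun s => n / (p * s) with he
  have hspos : ∀ s ∈ A, 0 < s := by
    intro s hs
    exact Nat.pos_of_dvd_of_pos (hmem s hs).1 hn0
  have hepos : ∀ s ∈ A, 1 ≤ e s := by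
    intro s hs
    exact Nat.div_pos (Nat.le_of_dvd hn0 (hps s hs)) (Nat.mul_pos (by omega) (hspos s hs))
  have hne : ∀ s ∈ A, n = p * s * e s := fun s hs => (Nat.mul_div_cancel' (hps s hs)).symm
  have hnse : ∀ s ∈ A, n / s = p * e s := by
    intro s hs
    rw [hne s hs]
    rw [show p * s * e s = s * (p * e s) by ring, Nat.mul_div_cancel_left _ (hspos s hs)]
  have hnpse : ∀ s ∈ A, n / (p * s) = e s := fun s hs => rfl
  have hmu : ∀ s ∈ A, μ (p * s) = - μ s := by
    intro s hs
    obtain ⟨_, hsq, hnps⟩ := hmem s hs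
    rw [isMultiplicative_moebius.map_mul_of_coprime ((Nat.Prime.coprime_iff_not_dvd hp).mpr hnps),
      moebius_apply_prime hp]
    ring
  -- the cyclotomic product
  have hF : (((cyclotomic n ℤ).eval 2 : ℤ) : ℚ)
      = ∏ s ∈ A, (((2:ℚ) ^ (n/s) - 1) ^ (μ s) * ((2:ℚ) ^ (n/(p*s)) - 1) ^ (μ (p*s))) := by
    rw [cyc_eval_prod n hn0,
      prod_pair n p hn0 hp hpn (fun s => ((2:ℚ) ^ (n/s) - 1) ^ (μ s))
        (fun s hs => by simp [moebius_eq_zero_of_not_squarefree hs])]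
  -- totient identity
  have hT : ((n.totient : ℤ)) = ∑ s ∈ A, (μ s) * ((p-1) * e s : ℕ) := by
    rw [totient_moebius n hn0,
      sum_pair n p hn0 hp hpn (fun s => (μ s : ℤ) * (n / s : ℕ))
        (fun s hs => by simp [moebius_eq_zero_of_not_squarefree hs])]
    refine Finset.sum_congr rfl ?_
    intro s hs
    rw [hnse s hs, hnpse s hs, hmu s hs, Nat.sub_mul, one_mul,
      Nat.cast_sub (Nat.le_mul_of_pos_left (e s) (by omega : 0 < p))]
    push_cast
    ring
  -- rewrite each pair term
  have hterm : ∀ s ∈ A, ((2:ℚ) ^ (n/s) - 1) ^ (μ s) * ((2:ℚ) ^ (n/(p*s)) - 1) ^ (μ (p*s))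
      = (wq p (e s)) ^ (μ s) * (2:ℚ) ^ ((μ s) * ((p-1) * e s : ℕ) : ℤ) := by
    intro s hs
    rw [hnse s hs, hnpse s hs, hmu s hs]
    have h1 : (0:ℚ) < 2 ^ (e s) - 1 := by
      have he1 := hepos s hs
      have : (1:ℚ) < 2 ^ (e s) := one_lt_pow₀ (by norm_num) (by omega)
      linarith
    have he1 := hepos s hs
    have hexp : (p-1) * e s + e s = p * e s := by
      conv_rhs => rw [← Nat.succ_pred_eq_of_pos (show 0 < p by omega)]
      rw [Nat.succ_mul, Nat.pred_eq_sub_one]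
    have h2 : ((2:ℚ)^(p*e s) - 1)/((2:ℚ)^(e s) - 1) = wq p (e s) * 2^((p-1)*(e s)) := by
      rw [wq, div_mul_eq_mul_div, div_eq_div_iff h1.ne' (one_sub_pos he1).ne']
      have hpow : (2:ℚ)^(p * e s) = 2^((p-1)*e s) * 2^(e s) := by
        rw [← pow_add, hexp]
      have hhalf : ∀ m : ℕ, (1/2:ℚ)^m = 1/2^m := fun m => by rw [div_pow, one_pow]
      rw [hhalf, hhalf, hpow]
      have h2e : (0:ℚ) < 2^(e s) := by positivity
      have h2pe : (0:ℚ) < 2^((p-1) * e s) := by positivity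
      field_simp
    calc ((2:ℚ) ^ (p * e s) - 1) ^ (μ s) * ((2:ℚ) ^ (e s) - 1) ^ (-μ s)
        = (((2:ℚ)^(p*e s) - 1)/((2:ℚ)^(e s) - 1)) ^ (μ s) := by
          rw [zpow_neg, ← div_eq_mul_inv, ← div_zpow]
      _ = (wq p (e s) * 2^((p-1)*(e s))) ^ (μ s) := by rw [h2]
      _ = (wq p (e s)) ^ (μ s) * (2:ℚ) ^ ((μ s) * ((p-1) * e s : ℕ) : ℤ) := by
          rw [mul_zpow, ← zpow_natCast (2:ℚ) ((p-1)*(e s)), ← zpow_mul, mul_comm ((μ s)) _]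
  -- assemble: F = R * 2^φ
  set R : ℚ := ∏ s ∈ A, (wq p (e s)) ^ (μ s) with hR
  have hF2 : (((cyclotomic n ℤ).eval 2 : ℤ) : ℚ) = R * 2 ^ ((n.totient : ℤ)) := by
    rw [hF, Finset.prod_congr rfl hterm, Finset.prod_mul_distrib,
      prod_zpow_two A (fun s => (μ s) * ((p-1) * e s : ℕ)), ← hT]
  -- split R into positive and negative parts
  have hQbound : ∀ B : Finset ℕ, B ⊆ A → (1 ≤ ∏ s ∈ B, wq p (e s) ∧ ∏ s ∈ B, wq p (e s) < 2) := by
    intro B hB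
    constructor
    · calc (1:ℚ) = ∏ _s ∈ B, (1:ℚ) := (Finset.prod_const_one).symm
        _ ≤ ∏ s ∈ B, wq p (e s) := Finset.prod_le_prod (fun _ _ => zero_le_one)
            (fun s hs => (wq_gt_one hp2 (hepos s (hB hs))).le)
    · have hinj : ∀ x ∈ B, ∀ y ∈ B, e x = e y → x = y := by
        intro x hx y hy hxy
        have h1 := hne x (hB hx)
        have h2 := hne y (hB hy)
        have hex := hepos x (hB hx)
        rw [hxy] at h1
        have := h1.symm.trans h2
        have hey : 0 < e y := by
          by_contra hc
          push_neg at hc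
          interval_cases h : e y
          · simp [h] at h2; omega
        exact Nat.eq_of_mul_eq_mul_left (by omega) (Nat.eq_of_mul_eq_mul_right hey this)
      rw [← Finset.prod_image (f := fun t => wq p t) (g := e) hinj]
      apply prod_wq_lt_two p hp2
      · intro h0
        obtain ⟨s, hsB, hse⟩ := Finset.mem_image.mp h0
        have := hepos s (hB hsB)
        omega
      · intro t ht htne h1mem
        obtain ⟨s1, hs1, hs1e⟩ := Finset.mem_image.mp h1mem
        obtain ⟨s, hsB, hse⟩ := Finset.mem_image.mp ht
        -- n = p * s1 (since e s1 = 1), so n is p * squarefree-coprime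
        have hn1 : n = p * s1 := by
          have h' := hne s1 (hB hs1)
          rw [hs1e, mul_one] at h'
          exact h'
        -- t = e s divides s1
        have hsd : s ∣ s1 := by
          have hps' := hps s (hB hsB)
          rw [hn1] at hps'
          exact (mul_dvd_mul_iff_left (by omega : p ≠ 0)).mp hps'
        have htd : t ∣ s1 := by
          have h1 := hne s (hB hsB)
          rw [hn1] at h1
          have hs1eq : s1 = s * t := by
            rw [← hse]
            exact Nat.eq_of_mul_eq_mul_left (by omega : 0 < p) (by rw [h1]; ring)
          exact ⟨s, by rw [hs1eq]; ring⟩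
        have hsq1 : Squarefree s1 := (hmem s1 (hB hs1)).2.1
        have hnp1 : ¬ p ∣ s1 := (hmem s1 (hB hs1)).2.2
        have ht2 : 2 ≤ t := by
          have : 1 ≤ t := by
            subst hse; exact hepos s (hB hsB)
          omega
        have hq := Nat.minFac_prime (by omega : t ≠ 1)
        have hqt : t.minFac ∣ t := Nat.minFac_dvd t
        have hqn : t.minFac ∣ n := dvd_trans (hqt.trans htd) (dvd_trans ((hmem s1 (hB hs1)).1) dvd_rfl)
        have hple : p ≤ t.minFac := Nat.minFac_le_of_dvd hq.two_le hqn
        have hqnep : t.minFac ≠ p := by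
          intro hcontra
          exact hnp1 (hcontra ▸ (hqt.trans htd))
        have : t.minFac ≤ t := Nat.minFac_le (by omega)
        omega
  have hApos : (1:ℚ)/2 < R ∧ R < 2 := by
    set A1 := A.filter (fun s => μ s = 1) with hA1
    set A2 := A.filter (fun s => ¬ (μ s = 1)) with hA2
    set Q1 : ℚ := ∏ s ∈ A1, wq p (e s) with hQ1d
    set Q2 : ℚ := ∏ s ∈ A2, wq p (e s) with hQ2d
    have hsplit : R = Q1 * Q2⁻¹ := by
      rw [hR, ← Finset.prod_filter_mul_prod_filter_not A (fun s => μ s = 1)]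
      congr 1
      · exact Finset.prod_congr rfl (fun s hs => by
          rw [(Finset.mem_filter.mp hs).2, zpow_one])
      · rw [hQ2d, ← Finset.prod_inv_distrib]
        refine Finset.prod_congr rfl (fun s hs => ?_)
        obtain ⟨hsA, hsne⟩ := Finset.mem_filter.mp hs
        rcases moebius_pm (hmem s hsA).2.1 with h | h
        · exact absurd h hsne
        · rw [h, zpow_neg, zpow_one]
    obtain ⟨hQ1ge, hQ1lt⟩ := hQbound A1 (Finset.filter_subset _ _)
    obtain ⟨hQ2ge, hQ2lt⟩ := hQbound A2 (Finset.filter_subset _ _)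
    rw [← hQ1d] at hQ1ge hQ1lt
    rw [← hQ2d] at hQ2ge hQ2lt
    have hQ2pos : 0 < Q2 := lt_of_lt_of_le one_pos hQ2ge
    have hRQ : R * Q2 = Q1 := by
      rw [hsplit, mul_assoc, inv_mul_cancel₀ hQ2pos.ne', mul_one]
    constructor
    · nlinarith
    · nlinarith
  -- conclude
  have hzp : (2:ℚ) ^ ((n.totient : ℤ)) = 2 ^ n.totient := zpow_natCast 2 n.totient
  rw [hF2, hzp]
  have hpow : (0:ℚ) < 2 ^ n.totient := by positivity
  constructor
  · exact mul_lt_mul_of_pos_right hApos.1 hpow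
  · exact mul_lt_mul_of_pos_right hApos.2 hpow

/-- For every `k ≥ 2`, `2^{d−1} < Φ_k(2) < 2^{d+1}` where `d = deg Φ_k = φ(k)`. -/
theorem stmt4 (k : ℕ) (hk : 2 ≤ k) :
    (2 : ℤ) ^ (k.totient - 1) < (Polynomial.cyclotomic k ℤ).eval 2 ∧
      (Polynomial.cyclotomic k ℤ).eval 2 < 2 ^ (k.totient + 1) := by
  obtain ⟨h1, h2⟩ := main_bound k hk
  have ht1 : 1 ≤ k.totient := Nat.totient_pos.mpr (by omega)
  constructor
  · have hq : ((2:ℤ)^(k.totient-1) : ℚ) < (((cyclotomic k ℤ).eval 2 : ℤ) : ℚ) := by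
      push_cast
      calc (2:ℚ)^(k.totient-1) = (1/2) * 2^(k.totient) := by
            have he : k.totient - 1 + 1 = k.totient := by omega
            have h' : (2:ℚ)^(k.totient) = 2^(k.totient-1) * 2 := by rw [← pow_succ, he]
            rw [h']
            ring
        _ < _ := h1
    exact_mod_cast hq
  · have hq : (((cyclotomic k ℤ).eval 2 : ℤ) : ℚ) < ((2:ℤ)^(k.totient+1) : ℚ) := by
      push_cast
      calc (((cyclotomic k ℤ).eval 2 : ℤ) : ℚ) < 2 * 2^(k.totient) := h2
        _ = 2^(k.totient+1) := by rw [pow_succ]; ring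
    exact_mod_cast hq
end

section
/- Let k be a positive integer with k ≠ 1 and k ≠ 6, and suppose r is a positive integer such that Φ_k(2) divides 2^r − 1. Then k divides r. -/
open Polynomial

section Aux

private lemma aux_pow_ge (p : ℕ) (hp : 4 ≤ p) : p ≤ 2 ^ (p - 2) := by
  induction p, hp using Nat.le_induction with
  | base => norm_num
  | succ n hn ih =>
    have : n + 1 - 2 = (n - 2) + 1 := by omega
    rw [this, pow_succ]
    omega

private lemma aux_pow_ge' (p : ℕ) (hp : 3 ≤ p) : p + 1 ≤ 2 ^ (p - 1) := by
  induction p, hp using Nat.le_induction with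
  | base => norm_num
  | succ n hn ih =>
    have : n + 1 - 1 = (n - 1) + 1 := by omega
    rw [this, pow_succ]
    omega

private lemma aux_size (p y : ℕ) (hp : 3 ≤ p) (hy : 2 ≤ y) (h3 : p = 3 → 8 ≤ y) :
    p * (y + 1) + 1 ≤ y ^ p := by
  rcases Nat.lt_or_ge p 4 with h4 | h4
  · -- p = 3, y ≥ 8
    have hp3 : p = 3 := by omega
    have hy8 : 8 ≤ y := h3 hp3
    subst hp3
    have : y ^ 3 = y * y * y := by ring
    nlinarith
  · -- p ≥ 4 : use 2^(p-2) ≥ p and y^p ≥ 2^(p-2) * y^2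
    have h1 : p ≤ 2 ^ (p - 2) := aux_pow_ge p h4
    have h2 : 2 ^ (p - 2) * y ^ 2 ≤ y ^ (p - 2) * y ^ 2 :=
      Nat.mul_le_mul_right _ (Nat.pow_le_pow_left hy _)
    have h3' : y ^ (p - 2) * y ^ 2 = y ^ p := by
      rw [← pow_add]; congr 1; omega
    have h5 : p * y ^ 2 ≤ 2 ^ (p - 2) * y ^ 2 := Nat.mul_le_mul_right _ h1
    have h6 : y + 2 ≤ y ^ 2 := by nlinarith
    have h7 : p * (y + 1) + 1 ≤ p * (y + 2) := by nlinarith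
    calc p * (y + 1) + 1 ≤ p * (y + 2) := h7
      _ ≤ p * y ^ 2 := Nat.mul_le_mul_left _ h6
      _ ≤ 2 ^ (p - 2) * y ^ 2 := h5
      _ ≤ y ^ (p - 2) * y ^ 2 := h2
      _ = y ^ p := h3'

/-- A geometric sum `1 + z + ⋯ + z^(p-1)` with `z ≡ 1 mod p`, `p` an odd prime,
is `≡ p mod p²`, hence not divisible by `p²`. -/
private lemma aux_geom_sum_not_dvd (p : ℕ) (hp : p.Prime) (hp2 : p ≠ 2) (z : ℤ)
    (hz : (p : ℤ) ∣ z - 1) : ¬ (p : ℤ) ^ 2 ∣ ∑ i ∈ Finset.range p, z ^ i := by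
  intro hdvd
  obtain ⟨t, ht⟩ := hz
  have hzeq : z = 1 + p * t := by linarith
  have hmod : ∀ i : ℕ, (p : ℤ) ^ 2 ∣ z ^ i - (1 + (i : ℤ) * ((p : ℤ) * t)) := by
    intro i
    induction i with
    | zero => simp
    | succ i ih =>
      have hkey : z ^ (i + 1) - (1 + ((i : ℤ) + 1) * ((p : ℤ) * t)) =
          (z ^ i - (1 + (i : ℤ) * ((p : ℤ) * t))) * z + (p : ℤ) ^ 2 * (t * t * i) := by
        rw [pow_succ, hzeq]; ring
      push_cast
      rw [hkey]
      exact dvd_add (ih.mul_right z) (Dvd.intro _ rfl)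
  have hsum_eq : (∑ i ∈ Finset.range p, z ^ i) -
      ((p : ℤ) + (∑ i ∈ Finset.range p, (i : ℤ)) * ((p : ℤ) * t)) =
      ∑ i ∈ Finset.range p, (z ^ i - (1 + (i : ℤ) * ((p : ℤ) * t))) := by
    rw [Finset.sum_sub_distrib, Finset.sum_add_distrib, Finset.sum_const,
      Finset.card_range, Finset.sum_mul]
    push_cast
    ring
  have hdvd_sum : (p : ℤ) ^ 2 ∣ (∑ i ∈ Finset.range p, z ^ i) -
      ((p : ℤ) + (∑ i ∈ Finset.range p, (i : ℤ)) * ((p : ℤ) * t)) := by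
    rw [hsum_eq]
    exact Finset.dvd_sum fun i _ => hmod i
  -- Gauss sum divisible by p
  have hgauss : p ∣ ∑ i ∈ Finset.range p, i := by
    have h2 : (∑ i ∈ Finset.range p, i) * 2 = p * (p - 1) := Finset.sum_range_id_mul_two p
    have : p ∣ (∑ i ∈ Finset.range p, i) * 2 := h2 ▸ Dvd.intro _ rfl
    rcases (Nat.Prime.dvd_mul hp).mp this with h | h
    · exact h
    · exact absurd ((Nat.prime_dvd_prime_iff_eq hp Nat.prime_two).mp h) hp2
  have hgaussZ : (p : ℤ) ∣ ∑ i ∈ Finset.range p, (i : ℤ) := by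
    have h := Int.natCast_dvd_natCast.mpr hgauss
    push_cast at h
    exact h
  obtain ⟨s, hs⟩ := hgaussZ
  have h1 : (p : ℤ) ^ 2 ∣ (∑ i ∈ Finset.range p, (i : ℤ)) * ((p : ℤ) * t) := by
    rw [hs]; exact ⟨s * t, by ring⟩
  have hfinal : (p : ℤ) ^ 2 ∣ (p : ℤ) := by
    have := dvd_sub hdvd hdvd_sum
    have h2 : (p : ℤ) ^ 2 ∣ (p : ℤ) + (∑ i ∈ Finset.range p, (i : ℤ)) * ((p : ℤ) * t) := by
      simpa using this
    simpa using dvd_sub h2 h1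
  have hple : (p : ℤ) ^ 2 ≤ (p : ℤ) := Int.le_of_dvd (by exact_mod_cast hp.pos) hfinal
  have : (2 : ℤ) ≤ (p : ℤ) := by exact_mod_cast hp.two_le
  nlinarith

/-- evaluating a cyclotomic polynomial of index `n * p^j` (with `p ∣ n`). -/
private lemma aux_eval_expand (p : ℕ) (hp : p.Prime) (n : ℕ) (hn : p ∣ n) (j : ℕ) :
    ∀ x : ℤ, (cyclotomic (n * p ^ j) ℤ).eval x = (cyclotomic n ℤ).eval (x ^ p ^ j) := by
  induction j with
  | zero => intro x; simp
  | succ j ih =>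
    intro x
    have h1 : n * p ^ (j + 1) = (n * p ^ j) * p := by ring
    have h2 : p ∣ n * p ^ j := hn.mul_right _
    rw [h1, ← cyclotomic_expand_eq_cyclotomic hp h2 ℤ, expand_eval, ih (x ^ p)]
    congr 1
    rw [← pow_mul, pow_succ, mul_comm (p ^ j) p]

end Aux

/-- Key structural lemma: if an odd prime `p` divides both `k` and `Φ_k(2)` then
`2` is a primitive `b`-th root of unity mod `p`, where `b = ord_compl[p] k`. -/
private lemma aux_key (k p : ℕ) (hk : 0 < k) (hp : p.Prime) (hp2 : p ≠ 2)
    (hpk : p ∣ k) (hpN : (p : ℤ) ∣ (cyclotomic k ℤ).eval 2) :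
    IsPrimitiveRoot (2 : ZMod p) (k / p ^ k.factorization p) := by
  haveI : Fact p.Prime := ⟨hp⟩
  set a := k.factorization p with ha_def
  set b := k / p ^ a with hb_def
  have ha : 0 < a := hp.factorization_pos_of_dvd hk.ne' hpk
  have hb : ¬ p ∣ b := Nat.not_dvd_ordCompl hp hk.ne'
  have hb0 : 0 < b := Nat.ordCompl_pos p hk.ne'
  have hk' : p ^ a * b = k := Nat.ordProj_mul_ordCompl_eq_self k p
  -- 2 is a root of cyclotomic k mod p
  have hroot : (cyclotomic k (ZMod p)).eval 2 = 0 := by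
    have h1 := cyclotomic.eval_apply (2 : ℤ) k (Int.castRingHom (ZMod p))
    have h2 : ((Int.castRingHom (ZMod p)) (2 : ℤ)) = (2 : ZMod p) := by simp
    rw [h2] at h1
    rw [h1]
    exact (ZMod.intCast_zmod_eq_zero_iff_dvd _ p).mpr hpN
  -- descend to cyclotomic b
  have hcyc : cyclotomic (p ^ a * b) (ZMod p) =
      cyclotomic b (ZMod p) ^ (p ^ a - p ^ (a - 1)) :=
    cyclotomic_mul_prime_pow_eq (ZMod p) hb ha
  have hroot_b : (cyclotomic b (ZMod p)).eval 2 = 0 := by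
    rw [← hk', hcyc, eval_pow] at hroot
    have hexp : p ^ a - p ^ (a - 1) ≠ 0 := by
      have : p ^ (a - 1) < p ^ a := Nat.pow_lt_pow_right hp.one_lt (by omega)
      omega
    exact pow_eq_zero_iff hexp |>.mp hroot
  haveI : NeZero ((b : ZMod p)) :=
    ⟨fun h => hb ((ZMod.natCast_eq_zero_iff b p).mp h)⟩
  exact isRoot_cyclotomic_iff.mp hroot_b

/-- `p² ∤ Φ_k(2)` when `p` is an odd prime dividing `k` and `Φ_k(2)`. -/
private lemma aux_sq_not_dvd (k p : ℕ) (hk : 0 < k) (hp : p.Prime) (hp2 : p ≠ 2)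
    (hpk : p ∣ k) (hpN : (p : ℤ) ∣ (cyclotomic k ℤ).eval 2) :
    ¬ (p : ℤ) ^ 2 ∣ (cyclotomic k ℤ).eval 2 := by
  intro hsq
  haveI : Fact p.Prime := ⟨hp⟩
  set a := k.factorization p with ha_def
  set b := k / p ^ a with hb_def
  have ha : 0 < a := hp.factorization_pos_of_dvd hk.ne' hpk
  have hb0 : 0 < b := Nat.ordCompl_pos p hk.ne'
  have hk' : p ^ a * b = k := Nat.ordProj_mul_ordCompl_eq_self k p
  have hprim : IsPrimitiveRoot (2 : ZMod p) b := aux_key k p hk hp hp2 hpk hpN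
  -- K' := k / p
  set K' : ℕ := p ^ (a - 1) * b with hK'_def
  have hK'k : K' * p = k := by
    rw [hK'_def, ← hk']
    have : p ^ a = p ^ (a - 1) * p := by
      rw [← pow_succ]; congr 1; omega
    rw [this]; ring
  have hK'pos : 0 < K' := Nat.mul_pos (Nat.pow_pos hp.pos) hb0
  have hK'lt : K' < k := by
    rw [← hK'k]
    have := hp.two_le
    nlinarith
  -- Φ_k(2) * (2^K' - 1) ∣ 2^k - 1
  have hpoly : (X ^ K' - 1) * cyclotomic k ℤ ∣ X ^ k - 1 :=
    X_pow_sub_one_mul_cyclotomic_dvd_X_pow_sub_one_of_dvd ℤ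
      (Nat.mem_properDivisors.mpr ⟨⟨p, hK'k.symm⟩, hK'lt⟩)
  have hdvdZ : ((2 : ℤ) ^ K' - 1) * (cyclotomic k ℤ).eval 2 ∣ (2 : ℤ) ^ k - 1 := by
    have := (evalRingHom (2 : ℤ)).map_dvd hpoly
    simpa using this
  -- geometric sum
  set z : ℤ := (2 : ℤ) ^ K' with hz_def
  have hzk : (2 : ℤ) ^ k = z ^ p := by rw [hz_def, ← pow_mul, hK'k]
  have hgeom : (∑ i ∈ Finset.range p, z ^ i) * (z - 1) = z ^ p - 1 := geom_sum_mul z p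
  have hz1 : z - 1 ≠ 0 := by
    have : (2 : ℤ) ≤ z := by
      rw [hz_def]
      calc (2:ℤ) = 2 ^ 1 := (pow_one 2).symm
        _ ≤ 2 ^ K' := pow_le_pow_right₀ (by norm_num) hK'pos
    omega
  have hNdvd : (cyclotomic k ℤ).eval 2 ∣ ∑ i ∈ Finset.range p, z ^ i := by
    have h1 : (z - 1) * (cyclotomic k ℤ).eval 2 ∣ (∑ i ∈ Finset.range p, z ^ i) * (z - 1) := by
      rw [hgeom, ← hzk]
      simpa [hz_def] using hdvdZ
    rw [mul_comm (∑ i ∈ Finset.range p, z ^ i) (z - 1)] at h1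
    exact (mul_dvd_mul_iff_left hz1).mp h1
  -- p ∣ z - 1
  have hp2b : (p : ℤ) ∣ (2 : ℤ) ^ b - 1 := by
    have h1 : (2 : ZMod p) ^ b = 1 := hprim.pow_eq_one
    have : (((2 : ℤ) ^ b - 1 : ℤ) : ZMod p) = 0 := by push_cast [h1]; ring
    exact (ZMod.intCast_zmod_eq_zero_iff_dvd _ p).mp this
  have hbK' : b ∣ K' := ⟨p ^ (a - 1), by rw [hK'_def]; ring⟩
  have hpz : (p : ℤ) ∣ z - 1 := by
    obtain ⟨m, hm⟩ := hbK'
    have : (2 : ℤ) ^ b - 1 ∣ z - 1 := by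
      rw [hz_def, hm, pow_mul]
      simpa using sub_dvd_pow_sub_pow ((2:ℤ) ^ b) 1 m
    exact hp2b.trans this
  exact aux_geom_sum_not_dvd p hp hp2 z hpz (hsq.trans hNdvd)

/-- Let `k` be a positive integer with `k ≠ 1` and `k ≠ 6`, and let `r` be a
positive integer such that `Φ_k(2)` divides `2^r − 1`. Then `k` divides `r`. -/
theorem stmt5 (k r : ℕ) (hk : 0 < k) (hk1 : k ≠ 1) (hk6 : k ≠ 6) (hr : 0 < r)
    (hdvd : (Polynomial.cyclotomic k ℤ).eval 2 ∣ 2 ^ r - 1) :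
    k ∣ r := by
  set N : ℤ := (cyclotomic k ℤ).eval 2 with hN_def
  have hk2 : 2 ≤ k := by omega
  have hNpos : 0 < N := cyclotomic_pos' k (by norm_num : (1:ℤ) < 2)
  have hNgt1 : 1 < N.natAbs := by
    have := Polynomial.sub_one_lt_natAbs_cyclotomic_eval (n := k) (q := 2) (by omega) (by norm_num)
    simpa [hN_def] using this
  -- every prime divisor of N is odd
  have hodd : ∀ p : ℕ, p.Prime → (p : ℤ) ∣ N → p ≠ 2 := by
    intro p hp hpN hp2
    subst hp2
    have hNk : N ∣ (2 : ℤ) ^ k - 1 := by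
      have := (evalRingHom (2 : ℤ)).map_dvd (cyclotomic.dvd_X_pow_sub_one k ℤ)
      simpa [hN_def] using this
    have h2 : (2 : ℤ) ∣ (2 : ℤ) ^ k - 1 := by exact_mod_cast hpN.trans hNk
    have h3 : (2 : ℤ) ∣ (2 : ℤ) ^ k := dvd_pow_self 2 hk.ne'
    omega
  by_cases hex : ∃ p : ℕ, p.Prime ∧ (p : ℤ) ∣ N ∧ ¬ p ∣ k
  · -- a prime divisor of N not dividing k: 2 is a primitive k-th root mod p
    obtain ⟨p, hp, hpN, hpk⟩ := hex
    haveI : Fact p.Prime := ⟨hp⟩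
    haveI : NeZero ((k : ZMod p)) :=
      ⟨fun h => hpk ((ZMod.natCast_eq_zero_iff k p).mp h)⟩
    have hroot : (cyclotomic k (ZMod p)).eval 2 = 0 := by
      have h1 := cyclotomic.eval_apply (2 : ℤ) k (Int.castRingHom (ZMod p))
      have h2 : ((Int.castRingHom (ZMod p)) (2 : ℤ)) = (2 : ZMod p) := by simp
      rw [h2] at h1
      rw [h1]
      exact (ZMod.intCast_zmod_eq_zero_iff_dvd _ p).mpr hpN
    have hprim : IsPrimitiveRoot (2 : ZMod p) k := isRoot_cyclotomic_iff.mp hroot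
    have h2r : (2 : ZMod p) ^ r = 1 := by
      have h0 : (((2 : ℤ) ^ r - 1 : ℤ) : ZMod p) = 0 :=
        (ZMod.intCast_zmod_eq_zero_iff_dvd _ p).mpr (hpN.trans hdvd)
      push_cast at h0
      linear_combination h0
    exact (hprim.pow_eq_one_iff_dvd r).mp h2r
  · -- contradiction branch
    exfalso
    push_neg at hex
    obtain ⟨p, hp, hpM⟩ := Nat.exists_prime_and_dvd (by omega : N.natAbs ≠ 1)
    have hpN : (p : ℤ) ∣ N := by
      rw [← Int.natAbs_dvd_natAbs, Int.natAbs_natCast]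
      exact hpM
    have hp2 : p ≠ 2 := hodd p hp hpN
    have hp3 : 3 ≤ p := by have := hp.two_le; omega
    have hpk : p ∣ k := hex p hp hpN
    haveI : Fact p.Prime := ⟨hp⟩
    set a := k.factorization p with ha_def
    set b := k / p ^ a with hb_def
    have ha : 0 < a := hp.factorization_pos_of_dvd hk.ne' hpk
    have hbnd : ¬ p ∣ b := Nat.not_dvd_ordCompl hp hk.ne'
    have hb0 : 0 < b := Nat.ordCompl_pos p hk.ne'
    have hk' : p ^ a * b = k := Nat.ordProj_mul_ordCompl_eq_self k p
    have hprim : IsPrimitiveRoot (2 : ZMod p) b := aux_key k p hk hp hp2 hpk hpN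
    have hbp1 : b ∣ p - 1 := by
      have h2 : (2 : ZMod p) ≠ 0 := by
        intro h
        have : ((2 : ℕ) : ZMod p) = 0 := by exact_mod_cast h
        have := (ZMod.natCast_eq_zero_iff 2 p).mp this
        exact hp2 ((Nat.prime_dvd_prime_iff_eq hp Nat.prime_two).mp this)
      exact (hprim.pow_eq_one_iff_dvd (p - 1)).mp (ZMod.pow_card_sub_one_eq_one h2)
    -- N = p
    have huniq : ∀ {q : ℕ}, q.Prime → q ∣ N.natAbs → q = p := by
      intro q hq hqM
      by_contra hqp
      have hqN : (q : ℤ) ∣ N := by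
        rw [← Int.natAbs_dvd_natAbs, Int.natAbs_natCast]
        exact hqM
      have hq2 : q ≠ 2 := hodd q hq hqN
      have hqk : q ∣ k := hex q hq hqN
      -- q divides b, so q ≤ p - 1; symmetrically p ≤ q - 1
      have hqb : q ∣ b := by
        have := (Nat.Coprime.dvd_of_dvd_mul_left ?_ (hk' ▸ hqk))
        · exact this
        · exact Nat.Coprime.pow_right _ ((Nat.coprime_primes hq hp).mpr hqp)
      have hq_le : q ≤ p - 1 := Nat.le_of_dvd (by omega) (hqb.trans hbp1)
      -- symmetric
      set a' := k.factorization q with ha'_def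
      set b' := k / q ^ a' with hb'_def
      have hprim' : IsPrimitiveRoot (2 : ZMod q) b' := aux_key k q hk hq hq2 hqk hqN
      have hb'p1 : b' ∣ q - 1 := by
        haveI : Fact q.Prime := ⟨hq⟩
        have h2 : (2 : ZMod q) ≠ 0 := by
          intro h
          have : ((2 : ℕ) : ZMod q) = 0 := by exact_mod_cast h
          have := (ZMod.natCast_eq_zero_iff 2 q).mp this
          exact hq2 ((Nat.prime_dvd_prime_iff_eq hq Nat.prime_two).mp this)
        exact (hprim'.pow_eq_one_iff_dvd (q - 1)).mp (ZMod.pow_card_sub_one_eq_one h2)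
      have hpb' : p ∣ b' := by
        have hk'' : q ^ a' * b' = k := Nat.ordProj_mul_ordCompl_eq_self k q
        have := (Nat.Coprime.dvd_of_dvd_mul_left ?_ (hk'' ▸ hpk))
        · exact this
        · exact Nat.Coprime.pow_right _ ((Nat.coprime_primes hp hq).mpr (Ne.symm hqp))
      have hp_le : p ≤ q - 1 :=
        Nat.le_of_dvd (by have := hq.two_le; omega) (hpb'.trans hb'p1)
      omega
    have hMpow : ∃ e : ℕ, N.natAbs = p ^ e :=
      ⟨_, Nat.eq_prime_pow_of_unique_prime_dvd (by omega : N.natAbs ≠ 0)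
        (fun {d} hd hdM => huniq hd hdM)⟩
    obtain ⟨e, he⟩ := hMpow
    have he1 : e = 1 := by
      have he_pos : 1 ≤ e := by
        rcases Nat.eq_zero_or_pos e with h | h
        · rw [h, pow_zero] at he; omega
        · exact h
      have he_lt : e < 2 := by
        by_contra h
        push_neg at h
        apply aux_sq_not_dvd k p hk hp hp2 hpk hpN
        have : (p : ℤ) ^ 2 ∣ (N.natAbs : ℤ) := by
          rw [he]
          push_cast
          exact pow_dvd_pow (p : ℤ) h
        rwa [Int.natAbs_of_nonneg hNpos.le] at this
      omega
    have hNp : N = (p : ℤ) := by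
      have : N.natAbs = p := by rw [he, he1, pow_one]
      rw [← Int.natAbs_of_nonneg hNpos.le, this]
    -- size contradiction: p < N
    set c : ℕ := p ^ (a - 1) with hc_def
    have hkpb : k = (p * b) * p ^ (a - 1) := by
      rw [← hk']
      have : p ^ a = p * p ^ (a - 1) := by
        rw [← pow_succ']; congr 1; omega
      rw [this]; ring
    have hNY : N = (cyclotomic (p * b) ℤ).eval ((2 : ℤ) ^ c) := by
      rw [hN_def, hkpb, aux_eval_expand p hp (p * b) (Dvd.intro _ rfl) (a - 1) 2]
    have hc1 : 1 ≤ c := Nat.one_le_iff_ne_zero.mpr (pow_ne_zero _ hp.pos.ne')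
    have hYge2 : (2 : ℤ) ≤ (2 : ℤ) ^ c := by
      calc (2:ℤ) = 2 ^ 1 := (pow_one 2).symm
        _ ≤ 2 ^ c := pow_le_pow_right₀ (by norm_num) hc1
    rcases Nat.lt_or_ge b 2 with hb1 | hb2
    · -- b = 1 : Φ_p(Y) = 1 + Y + ⋯ + Y^(p-1) ≥ Y^(p-1) ≥ 2^(p-1) > p
      have hb1' : b = 1 := by omega
      have hNsum : N = ∑ i ∈ Finset.range p, ((2:ℤ) ^ c) ^ i := by
        rw [hNY, hb1', mul_one, cyclotomic_prime ℤ p]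
        simp [eval_finset_sum]
      have hge : ((2:ℤ) ^ c) ^ (p - 1) ≤ N := by
        rw [hNsum]
        refine Finset.single_le_sum (f := fun i => ((2:ℤ) ^ c) ^ i) ?_ ?_
        · intro i _; positivity
        · exact Finset.mem_range.mpr (by omega)
      have h2p : (2:ℤ) ^ (p - 1) ≤ ((2:ℤ) ^ c) ^ (p - 1) :=
        pow_le_pow_left₀ (by norm_num) hYge2 _
      have hlt : (p : ℤ) + 1 ≤ (2:ℤ) ^ (p - 1) := by exact_mod_cast aux_pow_ge' p hp3
      rw [hNp] at hge
      omega
    · -- b ≥ 2 : real-number estimate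
      have hy8 : p = 3 → 8 ≤ 2 ^ c := by
        intro hp3'
        have hb2' : b = 2 := by
          have hd2 : b ∣ 2 := by
            have hpe : p - 1 = 2 := by omega
            rwa [hpe] at hbp1
          have := Nat.le_of_dvd (by norm_num) hd2
          omega
        have ha2 : 2 ≤ a := by
          by_contra h
          push_neg at h
          have ha1 : a = 1 := by omega
          rw [← hk', ha1, hp3', hb2'] at hk6
          norm_num at hk6
        have h3c : 3 ≤ c := by
          rw [hc_def, hp3']
          calc 3 = 3 ^ 1 := by norm_num
            _ ≤ 3 ^ (a - 1) := Nat.pow_le_pow_right (by norm_num) (by omega)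
        calc 8 = 2 ^ 3 := by norm_num
          _ ≤ 2 ^ c := Nat.pow_le_pow_right (by norm_num) h3c
      have harithN : p * (2 ^ c + 1) + 1 ≤ (2 ^ c) ^ p :=
        aux_size p (2 ^ c) hp3 (by
          calc 2 = 2 ^ 1 := (pow_one 2).symm
            _ ≤ 2 ^ c := Nat.pow_le_pow_right (by norm_num) hc1) hy8
      set q : ℝ := (2 : ℝ) ^ c with hq_def
      have hq1 : (1 : ℝ) < q := by
        rw [hq_def]
        calc (1:ℝ) < 2 := by norm_num
          _ = 2 ^ 1 := (pow_one 2).symm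
          _ ≤ 2 ^ c := pow_le_pow_right₀ (by norm_num) hc1
      have hqp1 : (1 : ℝ) < q ^ p := one_lt_pow₀ hq1 hp.pos.ne'
      have harith : (p : ℝ) * (q + 1) + 1 ≤ q ^ p := by
        have := harithN
        have hcast : ((p * (2 ^ c + 1) + 1 : ℕ) : ℝ) ≤ (((2 ^ c) ^ p : ℕ) : ℝ) := by
          exact_mod_cast this
        push_cast at hcast
        convert hcast using 2 <;> push_cast <;> ring
      have hNq : (N : ℝ) = (cyclotomic (b * p) ℝ).eval q := by
        rw [hNY]
        have h1 := cyclotomic.eval_apply ((2:ℤ) ^ c) (p * b) (Int.castRingHom ℝ)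
        have h2 : ((Int.castRingHom ℝ) ((2:ℤ) ^ c)) = q := by push_cast [hq_def]; norm_num
        rw [h2] at h1
        rw [mul_comm b p, h1]
        norm_num
      have hexp := cyclotomic_expand_eq_cyclotomic_mul hp hbnd ℝ
      have heval : (cyclotomic b ℝ).eval (q ^ p) =
          (cyclotomic (b * p) ℝ).eval q * (cyclotomic b ℝ).eval q := by
        have := congrArg (eval q) hexp
        rwa [expand_eval, eval_mul] at this
      have hlow : (q ^ p - 1) ^ b.totient < (cyclotomic b ℝ).eval (q ^ p) :=
        sub_one_pow_totient_lt_cyclotomic_eval hb2 hqp1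
      have hupp : (cyclotomic b ℝ).eval q ≤ (q + 1) ^ b.totient :=
        cyclotomic_eval_le_add_one_pow_totient hq1 b
      have hposb : 0 < (cyclotomic b ℝ).eval q := cyclotomic_pos' b hq1
      have htot : 1 ≤ b.totient := (Nat.totient_pos.mpr hb0)
      have hchain : (p : ℝ) * (cyclotomic b ℝ).eval q <
          (cyclotomic (b * p) ℝ).eval q * (cyclotomic b ℝ).eval q := by
        have hq1' : (0:ℝ) ≤ q + 1 := by linarith
        have step1 : (p : ℝ) * (cyclotomic b ℝ).eval q ≤ (p : ℝ) * (q + 1) ^ b.totient := by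
          have hp0 : (0:ℝ) ≤ (p:ℝ) := by positivity
          exact mul_le_mul_of_nonneg_left hupp hp0
        have step2 : (p : ℝ) * (q + 1) ^ b.totient ≤ ((p : ℝ) * (q + 1)) ^ b.totient := by
          rw [mul_pow]
          have : (p : ℝ) ≤ (p : ℝ) ^ b.totient := by
            apply le_self_pow₀ (by exact_mod_cast hp.one_lt.le) (by omega)
          exact mul_le_mul_of_nonneg_right this (by positivity)
        have step3 : ((p : ℝ) * (q + 1)) ^ b.totient ≤ (q ^ p - 1) ^ b.totient := by
          apply pow_le_pow_left₀ (by positivity)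
          linarith
        calc (p : ℝ) * (cyclotomic b ℝ).eval q ≤ (p : ℝ) * (q + 1) ^ b.totient := step1
          _ ≤ ((p : ℝ) * (q + 1)) ^ b.totient := step2
          _ ≤ (q ^ p - 1) ^ b.totient := step3
          _ < (cyclotomic b ℝ).eval (q ^ p) := hlow
          _ = (cyclotomic (b * p) ℝ).eval q * (cyclotomic b ℝ).eval q := heval
      have hfin : (p : ℝ) < (cyclotomic (b * p) ℝ).eval q :=
        lt_of_mul_lt_mul_right (by simpa [mul_comm] using hchain) hposb.le
      rw [← hNq, hNp] at hfin
      simp at hfin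
end

section
/- For every odd integer k ≥ 3 and every divisor κ of k with κ > 1, the cyclotomic polynomial Φ_k is κ-LRS-degenerate; i.e., Φ_k has two distinct complex roots whose ratio is a primitive κ-th root of unity. -/
open Polynomial

lemma coprime_of_modEq {a b n : ℕ} (h : a ≡ b [MOD n]) (hb : Nat.Coprime b n) :
    Nat.Coprime a n := by
  have hg : Nat.gcd n a = Nat.gcd n b := by
    rw [Nat.gcd_rec n a, Nat.gcd_rec n b, h]
  unfold Nat.Coprime at *
  rw [Nat.gcd_comm, hg, Nat.gcd_comm]
  exact hb

/-- For odd `n`, there is `a` with both `a` and `a + m` coprime to `n`. -/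
lemma exists_coprime_pair (n : ℕ) (hodd : Odd n) (m : ℕ) :
    ∃ a : ℕ, Nat.Coprime a n ∧ Nat.Coprime (a + m) n := by
  induction n using Nat.strong_induction_on with
  | _ n ih =>
    rcases Nat.lt_or_ge n 2 with h1 | h2
    · interval_cases n
      · simp at hodd
      · exact ⟨1, by simp, by simp⟩
    set p := n.minFac with hp
    have hpp : p.Prime := Nat.minFac_prime (by omega)
    have hpdvd : p ∣ n := Nat.minFac_dvd n
    have hp2 : p ≠ 2 := by
      rintro h
      rw [h] at hpdvd
      exact (Nat.not_even_iff_odd.mpr hodd) ((even_iff_two_dvd).mpr hpdvd)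
    have hp3 : 3 ≤ p := by
      have := hpp.two_le
      omega
    set e := n.factorization p with he
    set n' := n / p ^ e with hn'
    have hco : Nat.Coprime p n' := Nat.coprime_ordCompl hpp (by omega)
    have hmul : p ^ e * n' = n := Nat.ordProj_mul_ordCompl_eq_self n p
    have hn'dvd : n' ∣ n := Nat.ordCompl_dvd n p
    have hn'odd : Odd n' := by
      rw [← Nat.not_even_iff_odd, even_iff_two_dvd] at hodd ⊢
      exact fun h => hodd (h.trans hn'dvd)
    have hepos : 0 < e := hpp.factorization_pos_of_dvd (by omega) hpdvd
    have hn'lt : n' < n := by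
      have h3 : 3 ≤ p ^ e := le_trans hp3 (Nat.le_self_pow (by omega) p)
      have hn'pos : 0 < n' := Nat.ordCompl_pos p (by omega)
      nlinarith [hmul]
    obtain ⟨a', ha'1, ha'2⟩ := ih n' hn'lt hn'odd
    -- choose residue mod p
    set r : ℕ := if p ∣ (1 + m) then 2 else 1 with hr
    have hrp : ¬ p ∣ r := by
      have : r = 2 ∨ r = 1 := by unfold r; split <;> simp
      rcases this with h | h <;> rw [h] <;> exact Nat.not_dvd_of_pos_of_lt (by omega) (by omega)
    have hrmp : ¬ p ∣ (r + m) := by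
      unfold r
      split
      · rename_i hdd
        intro hc
        have h1 : p ∣ (2 + m) - (1 + m) := Nat.dvd_sub hc hdd
        have h2' : (2 + m) - (1 + m) = 1 := by omega
        rw [h2'] at h1
        have := Nat.le_of_dvd one_pos h1
        omega
      · rename_i hdd
        exact fun hc => hdd hc
    obtain ⟨c, hc1, hc2⟩ := Nat.chineseRemainder hco r a'
    refine ⟨c, ?_, ?_⟩
    · rw [← hmul]
      refine Nat.Coprime.mul_right ?_ (coprime_of_modEq hc2 ha'1)
      exact Nat.Coprime.pow_right e
        (coprime_of_modEq hc1 ((hpp.coprime_iff_not_dvd.mpr hrp).symm))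
    · rw [← hmul]
      refine Nat.Coprime.mul_right ?_ (coprime_of_modEq (hc2.add_right m) ha'2)
      exact Nat.Coprime.pow_right e
        (coprime_of_modEq (hc1.add_right m) ((hpp.coprime_iff_not_dvd.mpr hrmp).symm))


/-- A nonzero polynomial `f ∈ ℂ[x]` is `k`-LRS-degenerate if it has two
distinct roots `α, β` such that `α/β` is a primitive `k`-th root of unity. -/
def IsLRSDegenerateOfOrder (f : Polynomial ℂ) (k : ℕ) : Prop :=
  f ≠ 0 ∧ ∃ α β : ℂ, f.IsRoot α ∧ f.IsRoot β ∧ α ≠ β ∧ IsPrimitiveRoot (α / β) k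

/-- For every odd `k ≥ 3` and every divisor `κ > 1` of `k`, the cyclotomic
polynomial `Φ_k` is `κ`-LRS-degenerate. -/
theorem stmt8 (k : ℕ) (hk : 3 ≤ k) (hodd : Odd k) (κ : ℕ) (hκ : 1 < κ) (hdvd : κ ∣ k) :
    IsLRSDegenerateOfOrder (Polynomial.cyclotomic k ℂ) κ := by
  have hk0 : k ≠ 0 := by omega
  haveI : NeZero (k : ℂ) := ⟨Nat.cast_ne_zero.mpr hk0⟩
  set m := k / κ with hm
  have hkm : k = m * κ := (Nat.div_mul_cancel hdvd).symm
  obtain ⟨a, ha1, ha2⟩ := exists_coprime_pair k hodd m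
  set ζ : ℂ := Complex.exp (2 * Real.pi * Complex.I / k) with hζ
  have hprim : IsPrimitiveRoot ζ k := Complex.isPrimitiveRoot_exp k hk0
  have hζne : ζ ≠ 0 := Complex.exp_ne_zero _
  have hα : IsPrimitiveRoot (ζ ^ (a + m)) k := hprim.pow_of_coprime _ ha2
  have hβ : IsPrimitiveRoot (ζ ^ a) k := hprim.pow_of_coprime _ ha1
  have hdivζ : ζ ^ (a + m) / ζ ^ a = ζ ^ m := by
    rw [pow_add]
    field_simp
  have hratio : IsPrimitiveRoot (ζ ^ (a + m) / ζ ^ a) κ := by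
    rw [hdivζ]
    exact hprim.pow (by omega) hkm
  refine ⟨Polynomial.cyclotomic_ne_zero k ℂ, ζ ^ (a + m), ζ ^ a, ?_, ?_, ?_, hratio⟩
  · exact (Polynomial.isRoot_cyclotomic_iff).mpr hα
  · exact (Polynomial.isRoot_cyclotomic_iff).mpr hβ
  · intro h
    have h1 : ζ ^ (a + m) / ζ ^ a = 1 := by
      rw [h]
      exact div_self (pow_ne_zero _ hζne)
    exact (hratio.ne_one hκ) h1
end

section
/- For every even integer k ≥ 4 and every divisor κ of k/2 with κ > 1, the cyclotomic polynomial Φ_k is κ-LRS-degenerate. -/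
open Polynomial

private lemma aux_coprime_exists (d κ : ℕ) (hκ : 0 < κ) (hd : 2 ∣ d) :
    ∃ u : ℕ, Nat.Coprime u κ ∧ Nat.Coprime (1 + d * u) κ := by
  have hκ0 : κ ≠ 0 := hκ.ne'
  set c := Nat.gcd κ (1 + d) with hc
  have hc0 : c ≠ 0 := Nat.gcd_ne_zero_left hκ0
  set N := Nat.gcd κ (c ^ κ) with hN
  have hNdvd : N ∣ κ := Nat.gcd_dvd_left _ _
  have hN0 : N ≠ 0 := Nat.gcd_ne_zero_left hκ0
  set M := κ / N with hM
  have hNM : N * M = κ := Nat.mul_div_cancel' hNdvd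
  have hM0 : M ≠ 0 := by
    intro h; rw [h, Nat.mul_zero] at hNM; exact hκ0 hNM.symm
  -- primes dividing N divide c
  have hNc : ∀ p : ℕ, p.Prime → p ∣ N → p ∣ c := fun p hp hpN =>
    hp.dvd_of_dvd_pow (hpN.trans (Nat.gcd_dvd_right _ _))
  -- a prime dividing κ and c divides N
  have hcN : ∀ p : ℕ, p.Prime → p ∣ κ → p ∣ c → p ∣ N := fun p hp hpκ hpc =>
    Nat.dvd_gcd hpκ (hpc.trans (dvd_pow_self c hκ0))
  -- for primes dividing N, the full power of p in κ divides N
  have hfac : ∀ p : ℕ, p.Prime → p ∣ N → N.factorization p = κ.factorization p := by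
    intro p hp hpN
    have hpc : p ∣ c := hNc p hp hpN
    have h1 : N.factorization = κ.factorization ⊓ (c ^ κ).factorization :=
      Nat.factorization_gcd hκ0 (pow_ne_zero _ hc0)
    have h2 : (c ^ κ).factorization p = κ * c.factorization p := by
      rw [Nat.factorization_pow]; simp
    have h3 : 1 ≤ c.factorization p := hp.factorization_pos_of_dvd hc0 hpc
    have h4 : κ.factorization p ≤ κ * c.factorization p := by
      have := Nat.factorization_lt p hκ0
      calc κ.factorization p ≤ κ := this.le
        _ = κ * 1 := (Nat.mul_one κ).symm
        _ ≤ κ * c.factorization p := Nat.mul_le_mul_left κ h3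
    rw [h1]
    simp only [Finsupp.inf_apply, h2]
    exact min_eq_left h4
  have hcop : Nat.Coprime N M := by
    by_contra h
    have hg : Nat.gcd N M ≠ 1 := h
    set p := (Nat.gcd N M).minFac with hp
    have hpp : p.Prime := Nat.minFac_prime hg
    have hpN : p ∣ N := (Nat.minFac_dvd _).trans (Nat.gcd_dvd_left _ _)
    have hpM : p ∣ M := (Nat.minFac_dvd _).trans (Nat.gcd_dvd_right _ _)
    have hpos : 0 < M.factorization p := hpp.factorization_pos_of_dvd hM0 hpM
    have : M.factorization p = κ.factorization p - N.factorization p := by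
      rw [hM, Nat.factorization_div hNdvd]
      simp [Finsupp.tsub_apply]
    rw [this, hfac p hpp hpN, Nat.sub_self] at hpos
    exact Nat.lt_irrefl 0 hpos
  have hNodd : ¬ 2 ∣ N := by
    intro h2
    have h2c : 2 ∣ c := hNc 2 Nat.prime_two h2
    have h2d : 2 ∣ 1 + d := h2c.trans (Nat.gcd_dvd_right _ _)
    omega
  obtain ⟨u, hu2, hu1⟩ := Nat.chineseRemainder hcop 2 1
  refine ⟨u, ?_, ?_⟩
  · rw [← hNM, Nat.coprime_mul_iff_right]
    constructor
    · have : Nat.gcd u N = Nat.gcd 2 N := hu2.gcd_eq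
      have h2N : Nat.Coprime 2 N := (Nat.Prime.coprime_iff_not_dvd Nat.prime_two).2 hNodd
      exact this.trans h2N
    · have : Nat.gcd u M = Nat.gcd 1 M := hu1.gcd_eq
      rw [Nat.Coprime, this, Nat.gcd_one_left]
  · rw [← hNM, Nat.coprime_mul_iff_right]
    constructor
    · -- Coprime (1 + d*u) N
      have hmod : (1 + d * u) ≡ (1 + d * 2) [MOD N] :=
        Nat.ModEq.add_left 1 (Nat.ModEq.mul_left d hu2)
      rw [Nat.Coprime, hmod.gcd_eq]
      by_contra h
      set p := (Nat.gcd (1 + d * 2) N).minFac with hp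
      have hpp : p.Prime := Nat.minFac_prime h
      have hp1 : p ∣ 1 + d * 2 := (Nat.minFac_dvd _).trans (Nat.gcd_dvd_left _ _)
      have hpN : p ∣ N := (Nat.minFac_dvd _).trans (Nat.gcd_dvd_right _ _)
      have hpc : p ∣ c := hNc p hpp hpN
      have hpd1 : p ∣ 1 + d := hpc.trans (Nat.gcd_dvd_right _ _)
      have hpd : p ∣ d := by
        have := Nat.dvd_sub hp1 hpd1
        simpa [Nat.add_sub_add_left, Nat.two_mul, Nat.mul_two] using this
      have : p ∣ 1 := by
        have := Nat.dvd_sub hpd1 hpd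
        simpa using this
      exact Nat.Prime.one_lt hpp |>.ne' (Nat.dvd_one.mp this)
    · -- Coprime (1 + d*u) M
      have hmod : (1 + d * u) ≡ (1 + d * 1) [MOD M] :=
        Nat.ModEq.add_left 1 (Nat.ModEq.mul_left d hu1)
      rw [Nat.Coprime, hmod.gcd_eq, Nat.mul_one]
      by_contra h
      set p := (Nat.gcd (1 + d) M).minFac with hp
      have hpp : p.Prime := Nat.minFac_prime h
      have hp1 : p ∣ 1 + d := (Nat.minFac_dvd _).trans (Nat.gcd_dvd_left (1 + d) M)
      have hpM : p ∣ M := (Nat.minFac_dvd _).trans (Nat.gcd_dvd_right _ _)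
      have hpκ : p ∣ κ := hpM.trans ⟨N, by rw [← hNM, Nat.mul_comm]⟩
      have hpc : p ∣ c := Nat.dvd_gcd hpκ hp1
      have hpN : p ∣ N := hcN p hpp hpκ hpc
      have : p ∣ Nat.gcd N M := Nat.dvd_gcd hpN hpM
      rw [hcop] at this
      exact Nat.Prime.one_lt hpp |>.ne' (Nat.dvd_one.mp this)

/-- For every even `k ≥ 4` and every divisor `κ > 1` of `k/2`, the cyclotomic
polynomial `Φ_k` is `κ`-LRS-degenerate. -/
theorem stmt9 (k : ℕ) (hk : 4 ≤ k) (heven : Even k) (κ : ℕ) (hκ : 1 < κ)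
    (hdvd : κ ∣ k / 2) :
    IsLRSDegenerateOfOrder (Polynomial.cyclotomic k ℂ) κ := by
  have hk0 : k ≠ 0 := by omega
  obtain ⟨s, hs⟩ := heven
  have hks : k = 2 * s := by omega
  have hk2 : k / 2 = s := by omega
  rw [hk2] at hdvd
  obtain ⟨t, ht⟩ := hdvd
  set d := k / κ with hdd
  have hκpos : 0 < κ := by omega
  have hdval : d = 2 * t := by
    rw [hdd, hks, ht]
    rw [show 2 * (κ * t) = κ * (2 * t) by ring]
    exact Nat.mul_div_cancel_left _ hκpos
  have hd2 : 2 ∣ d := ⟨t, hdval⟩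
  have hkd : k = d * κ := by
    rw [hdval, hks, ht]; ring
  obtain ⟨u, huκ, huk⟩ := aux_coprime_exists d κ hκpos hd2
  have hζ := Complex.isPrimitiveRoot_exp k hk0
  set ζ := Complex.exp (2 * ↑Real.pi * Complex.I / ↑k) with hζdef
  have hζd : IsPrimitiveRoot (ζ ^ d) κ := hζ.pow (by omega) hkd
  have hratio : IsPrimitiveRoot ((ζ ^ d) ^ u) κ := hζd.pow_of_coprime u huκ
  have hcopk : Nat.Coprime (1 + d * u) k := by
    rw [hkd, Nat.coprime_mul_iff_right]
    refine ⟨?_, huk⟩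
    rw [Nat.coprime_add_mul_left_left 1 d u]
    exact Nat.coprime_one_left d
  have hα : IsPrimitiveRoot (ζ ^ (1 + d * u)) k := hζ.pow_of_coprime _ hcopk
  have hζne : ζ ≠ 0 := hζ.ne_zero hk0
  have hdiv : ζ ^ (1 + d * u) / ζ = (ζ ^ d) ^ u := by
    rw [pow_add, pow_one, mul_div_cancel_left₀ _ hζne, pow_mul]
  refine ⟨cyclotomic_ne_zero k ℂ, ζ ^ (1 + d * u), ζ, hα.isRoot_cyclotomic (by omega),
    hζ.isRoot_cyclotomic (by omega), ?_, ?_⟩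
  · intro h
    have h1 : (ζ ^ d) ^ u = 1 := by
      rw [← hdiv, h, div_self hζne]
    have : κ = 1 := hratio.unique (h1 ▸ IsPrimitiveRoot.one)
    omega
  · rw [hdiv]; exact hratio
end

section
/- Let f ∈ ℤ[x] be k-LRS-degenerate for some k ≥ 2, let F_q be a finite field containing a primitive k-th root of unity ζ, let ψ: ℤ[x] → F_q[x] be coefficientwise reduction, and set g = ψ(f). If deg(g) = deg(f), then gcd(g(x), g(ζx)) has degree at least 1 in F_q[x]. -/
open Polynomial
open scoped Classical

/-- An integer polynomial `f` is `k`-LRS-degenerate if it has two distinct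
complex roots `α, β` such that `α/β` is a primitive `k`-th root of unity. -/
def IsLRSDegenerateOfOrderZ (f : Polynomial ℤ) (k : ℕ) : Prop :=
  f ≠ 0 ∧ ∃ α β : ℂ, Polynomial.aeval α f = 0 ∧ Polynomial.aeval β f = 0 ∧
    α ≠ β ∧ IsPrimitiveRoot (α / β) k

section Sylv

variable {R : Type*} [CommRing R]

/-- A Sylvester-style matrix for two polynomials, each thought of as having degree `≤ n`. -/
noncomputable def sylvAux (n : ℕ) (p q : Polynomial R) :
    Matrix (Fin n ⊕ Fin n) (Fin n ⊕ Fin n) R := fun i c =>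
  (Sum.elim (fun i : Fin n => p * X ^ (i : ℕ)) (fun i : Fin n => q * X ^ (i : ℕ)) i).coeff
    (finSumFinEquiv c : ℕ)

lemma sylvAux_map {S : Type*} [CommRing S] (φ : R →+* S) (n : ℕ) (p q : Polynomial R) :
    (sylvAux n p q).map φ = sylvAux n (p.map φ) (q.map φ) := by
  ext i c
  cases i <;>
    simp [sylvAux, Matrix.map_apply, ← Polynomial.coeff_map, Polynomial.map_mul,
      Polynomial.map_pow]

/-- The polynomial with coefficients given by `a`. -/
noncomputable def upoly (n : ℕ) (a : Fin n → R) : Polynomial R :=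
  ∑ i : Fin n, C (a i) * X ^ (i : ℕ)

lemma upoly_coeff (n : ℕ) (a : Fin n → R) (j : ℕ) :
    (upoly n a).coeff j = if h : j < n then a ⟨j, h⟩ else 0 := by
  rw [upoly, finset_sum_coeff]
  simp only [coeff_C_mul, coeff_X_pow, mul_ite, mul_one, mul_zero]
  split
  · next h =>
    rw [Finset.sum_eq_single (⟨j, h⟩ : Fin n)]
    · simp
    · intro b _ hb
      simp only [ite_eq_right_iff]
      intro hbj
      exact absurd (Fin.ext hbj.symm) hb
    · simp
  · next h =>
    apply Finset.sum_eq_zero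
    intro b _
    simp only [ite_eq_right_iff]
    intro hbj
    exact absurd (hbj ▸ b.isLt) h

lemma upoly_natDegree_lt (n : ℕ) (hn : 0 < n) (a : Fin n → R) : (upoly n a).natDegree < n := by
  by_contra h
  push_neg at h
  have h0 : upoly n a ≠ 0 := by
    intro h0
    rw [h0, natDegree_zero] at h
    omega
  have := leadingCoeff_ne_zero.2 h0
  rw [leadingCoeff, upoly_coeff, dif_neg (by omega)] at this
  exact this rfl

lemma upoly_eq (n : ℕ) (U : Polynomial R) (hU : U.natDegree < n) :
    upoly n (fun i => U.coeff (i : ℕ)) = U := by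
  ext j
  rw [upoly_coeff]
  split
  · rfl
  · next h => exact (coeff_eq_zero_of_natDegree_lt (by omega)).symm

lemma upoly_mul_coeff (n : ℕ) (a : Fin n → R) (p : Polynomial R) (m : ℕ) :
    (upoly n a * p).coeff m = ∑ i : Fin n, a i * (p * X ^ (i : ℕ)).coeff m := by
  rw [upoly, Finset.sum_mul, finset_sum_coeff]
  congr 1
  ext i
  rw [mul_right_comm, mul_assoc, coeff_C_mul]

lemma sylvAux_vecMul (n : ℕ) (p q : Polynomial R) (w : Fin n ⊕ Fin n → R) (c : Fin n ⊕ Fin n) :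
    Matrix.vecMul w (sylvAux n p q) c =
      (upoly n (w ∘ Sum.inl) * p + upoly n (w ∘ Sum.inr) * q).coeff (finSumFinEquiv c : ℕ) := by
  rw [coeff_add, upoly_mul_coeff, upoly_mul_coeff]
  simp [Matrix.vecMul, dotProduct, Fintype.sum_sum_type, sylvAux]

lemma not_isCoprime_of_sylvAux_det {K : Type*} [Field K] {n : ℕ} (hn : 0 < n)
    {p q : Polynomial K} (hp : p.natDegree = n) (hq : q.natDegree ≤ n)
    (hdet : (sylvAux n p q).det = 0) : ¬ IsCoprime p q := by
  obtain ⟨w, hw0, hw⟩ := Matrix.exists_vecMul_eq_zero_iff.2 hdet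
  set U := upoly n (w ∘ Sum.inl) with hUdef
  set V := upoly n (w ∘ Sum.inr) with hVdef
  have hUlt : U.natDegree < n := upoly_natDegree_lt n hn _
  have hVlt : V.natDegree < n := upoly_natDegree_lt n hn _
  have hp0 : p ≠ 0 := by
    intro h
    rw [h, natDegree_zero] at hp
    omega
  have hrel : U * p + V * q = 0 := by
    ext j
    rcases lt_or_ge j (n + n) with hj | hj
    · have := congrFun hw (finSumFinEquiv.symm ⟨j, hj⟩)
      rw [sylvAux_vecMul, Equiv.apply_symm_apply] at this
      simpa using this
    · rw [coeff_zero]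
      apply coeff_eq_zero_of_natDegree_lt
      calc (U * p + V * q).natDegree
          ≤ max (U * p).natDegree (V * q).natDegree := natDegree_add_le _ _
        _ < n + n := by
            apply max_lt <;>
              exact lt_of_le_of_lt (natDegree_mul_le)
                (by omega)
        _ ≤ j := hj
  intro hco
  have hpV : p ∣ V := by
    apply hco.dvd_of_dvd_mul_right
    refine ⟨-U, ?_⟩
    linear_combination hrel
  have hV0 : V = 0 := eq_zero_of_dvd_of_natDegree_lt hpV (by omega)
  have hU0 : U = 0 := by
    rw [hV0, zero_mul, add_zero] at hrel
    rcases mul_eq_zero.1 hrel with h | h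
    · exact h
    · exact absurd h hp0
  apply hw0
  funext i
  cases i with
  | inl i =>
    have := congrArg (fun P => P.coeff (i : ℕ)) hU0
    rwa [hUdef, upoly_coeff, dif_pos i.isLt, coeff_zero] at this
  | inr i =>
    have := congrArg (fun P => P.coeff (i : ℕ)) hV0
    rwa [hVdef, upoly_coeff, dif_pos i.isLt, coeff_zero] at this

lemma sylvAux_det_zero_of_common_root {K : Type*} [Field K] {n : ℕ}
    {p q : Polynomial K} (hp : p.natDegree = n) (hq : q.natDegree = n) (hn : 0 < n)
    (β : K) (hpβ : p.IsRoot β) (hqβ : q.IsRoot β) : (sylvAux n p q).det = 0 := by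
  have hp0 : p ≠ 0 := by intro h; rw [h, natDegree_zero] at hp; omega
  have hq0 : q ≠ 0 := by intro h; rw [h, natDegree_zero] at hq; omega
  obtain ⟨p₁, hp₁⟩ := (dvd_iff_isRoot.2 hpβ)
  obtain ⟨q₁, hq₁⟩ := (dvd_iff_isRoot.2 hqβ)
  have hp₁0 : p₁ ≠ 0 := by rintro rfl; rw [mul_zero] at hp₁; exact hp0 hp₁
  have hq₁0 : q₁ ≠ 0 := by rintro rfl; rw [mul_zero] at hq₁; exact hq0 hq₁
  have hXβ : (X - C β) ≠ 0 := X_sub_C_ne_zero β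
  have hp₁deg : p₁.natDegree < n := by
    have := natDegree_mul hXβ hp₁0
    rw [← hp₁, natDegree_X_sub_C] at this
    omega
  have hq₁deg : q₁.natDegree < n := by
    have := natDegree_mul hXβ hq₁0
    rw [← hq₁, natDegree_X_sub_C] at this
    omega
  rw [← Matrix.exists_vecMul_eq_zero_iff]
  refine ⟨Sum.elim (fun i : Fin n => q₁.coeff (i : ℕ)) (fun i : Fin n => -p₁.coeff (i : ℕ)),
    ?_, ?_⟩
  · intro h
    apply hq₁0
    ext j
    rcases lt_or_ge j n with hj | hj
    · have := congrFun h (Sum.inl (⟨j, hj⟩ : Fin n))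
      simpa using this
    · exact coeff_eq_zero_of_natDegree_lt (by omega)
  · funext c
    rw [sylvAux_vecMul]
    have hU : upoly n ((Sum.elim (fun i : Fin n => q₁.coeff (i : ℕ))
        (fun i : Fin n => -p₁.coeff (i : ℕ))) ∘ Sum.inl) = q₁ := upoly_eq n q₁ hq₁deg
    have hV : upoly n ((Sum.elim (fun i : Fin n => q₁.coeff (i : ℕ))
        (fun i : Fin n => -p₁.coeff (i : ℕ))) ∘ Sum.inr) = -p₁ := by
      have : ((Sum.elim (fun i : Fin n => q₁.coeff (i : ℕ))
          (fun i : Fin n => -p₁.coeff (i : ℕ))) ∘ Sum.inr) =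
          fun i : Fin n => (-p₁).coeff (i : ℕ) := by funext i; simp
      rw [this]
      exact upoly_eq n (-p₁) (by rwa [natDegree_neg])
    rw [hU, hV, hp₁, hq₁, Pi.zero_apply]
    have : q₁ * ((X - C β) * p₁) + -p₁ * ((X - C β) * q₁) = 0 := by ring
    rw [this, coeff_zero]

end Sylv

/-- Let `f ∈ ℤ[x]` be `k`-LRS-degenerate (`k ≥ 2`), let `F_q` be a finite field
containing a primitive `k`-th root of unity `ζ`, and let `g` be the
coefficientwise reduction of `f` to `F_q[x]`. If `deg g = deg f`, then
`gcd(g(x), g(ζx))` has degree at least `1`. -/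
theorem stmt13 (f : Polynomial ℤ) (k : ℕ) (hk : 2 ≤ k)
    (hf : IsLRSDegenerateOfOrderZ f k)
    (F : Type*) [Field F] [Fintype F] (ζ : F) (hζ : IsPrimitiveRoot ζ k)
    (g : Polynomial F) (hg : g = f.map (Int.castRingHom F))
    (hdeg : g.natDegree = f.natDegree) :
    1 ≤ (EuclideanDomain.gcd g (g.comp (Polynomial.C ζ * Polynomial.X))).natDegree := by
  obtain ⟨hf0, α, β, hα, hβ, hαβ, hω⟩ := hf
  set n := f.natDegree with hn
  -- basic facts
  have hn0 : 0 < n := by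
    by_contra hcon
    push_neg at hcon
    have h0 : f.natDegree = 0 := by omega
    obtain ⟨a, ha⟩ := natDegree_eq_zero.1 h0
    rw [← ha] at hα hf0
    simp only [aeval_C, eq_intCast, map_intCast, algebraMap_int_eq, Int.cast_eq_zero] at hα
    have : a = 0 := hα
    rw [this, map_zero] at hf0
    exact hf0 rfl
  set ω : ℂ := α / β with hωdef
  have hω0 : ω ≠ 0 := hω.ne_zero (by omega)
  have hβ0 : β ≠ 0 := by
    intro h
    rw [h, div_zero] at hωdef
    exact hω0 hωdef
  have hωβ : ω * β = α := div_mul_cancel₀ α hβ0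
  -- the complex polynomials
  set pC : Polynomial ℂ := f.map (Int.castRingHom ℂ) with hpC
  set qC : Polynomial ℂ := pC.comp (C ω * X) with hqC
  have hpCdeg : pC.natDegree = n := natDegree_map_eq_of_injective Int.cast_injective f
  have hCωX : (C ω * X).natDegree = 1 := by
    rw [natDegree_C_mul hω0, natDegree_X]
  have hqCdeg : qC.natDegree = n := by
    rw [hqC, natDegree_comp, hCωX, mul_one, hpCdeg]
  have hpCβ : pC.IsRoot β := by
    rw [IsRoot, hpC, eval_map, ← algebraMap_int_eq, ← aeval_def, hβ]
  have hqCβ : qC.IsRoot β := by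
    rw [IsRoot, hqC, eval_comp, eval_mul, eval_C, eval_X, hωβ]
    rw [hpC, eval_map, ← algebraMap_int_eq, ← aeval_def, hα]
  have hdetC : (sylvAux n pC qC).det = 0 :=
    sylvAux_det_zero_of_common_root hpCdeg hqCdeg hn0 β hpCβ hqCβ
  -- the generic polynomials over ℤ[T]
  set p0 : Polynomial (Polynomial ℤ) := f.map (C : ℤ →+* Polynomial ℤ) with hp0
  set q0 : Polynomial (Polynomial ℤ) := p0.comp (C X * X) with hq0
  set D : Polynomial ℤ := (sylvAux n p0 q0).det with hD
  -- specialization to ℂ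
  set φC : Polynomial ℤ →+* ℂ := eval₂RingHom (Int.castRingHom ℂ) ω with hφC
  have hφCC : φC.comp (C : ℤ →+* Polynomial ℤ) = Int.castRingHom ℂ := by
    exact RingHom.ext_int _ _
  have hp0C : p0.map φC = pC := by
    rw [hp0, map_map, hφCC]
  have hq0C : q0.map φC = qC := by
    rw [hq0, map_comp, hp0C, Polynomial.map_mul, map_C, map_X]
    simp [hφC, coe_eval₂RingHom]
    rfl
  have hφCD : φC D = 0 := by
    rw [hD, RingHom.map_det, RingHom.mapMatrix_apply, sylvAux_map, hp0C, hq0C, hdetC]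
  -- D is divisible by the cyclotomic polynomial
  have hcycdvd : cyclotomic k ℤ ∣ D := by
    have haev : (aeval ω) D = 0 := by
      rw [aeval_def, algebraMap_int_eq]
      exact hφCD
    have h1 : minpoly ℚ ω ∣ D.map (Int.castRingHom ℚ) := by
      apply minpoly.dvd
      rw [← algebraMap_int_eq, aeval_map_algebraMap]
      exact haev
    rw [← cyclotomic_eq_minpoly_rat hω (by omega), ← map_cyclotomic k (Int.castRingHom ℚ)] at h1
    exact (map_dvd_map (Int.castRingHom ℚ) Int.cast_injective (cyclotomic.monic k ℤ)).1 h1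
  -- specialization to F
  set h : Polynomial F := g.comp (C ζ * X) with hh
  set φF : Polynomial ℤ →+* F := eval₂RingHom (Int.castRingHom F) ζ with hφF
  have hφFC : φF.comp (C : ℤ →+* Polynomial ℤ) = Int.castRingHom F := RingHom.ext_int _ _
  have hp0F : p0.map φF = g := by
    rw [hp0, map_map, hφFC, hg]
  have hq0F : q0.map φF = h := by
    rw [hq0, map_comp, hp0F, Polynomial.map_mul, map_C, map_X, hh]
    simp [hφF, coe_eval₂RingHom]
  have hφFD : φF D = 0 := by
    obtain ⟨e, he⟩ := hcycdvd
    rw [he, map_mul]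
    have : φF (cyclotomic k ℤ) = 0 := by
      rw [hφF, coe_eval₂RingHom, eval₂_eq_eval_map, map_cyclotomic]
      exact hζ.isRoot_cyclotomic (by omega)
    rw [this, zero_mul]
  have hdetF : (sylvAux n g h).det = 0 := by
    have h2 := RingHom.map_det φF (sylvAux n p0 q0)
    rw [RingHom.mapMatrix_apply, sylvAux_map, hp0F, hq0F] at h2
    rw [← h2]
    exact hφFD
  -- conclude
  have hζ0 : ζ ≠ 0 := hζ.ne_zero (by omega)
  have hgdeg : g.natDegree = n := hdeg
  have hhdeg : h.natDegree ≤ n := by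
    rw [hh, natDegree_comp, natDegree_C_mul hζ0, natDegree_X, mul_one, hgdeg]
  have hnotco : ¬ IsCoprime g h := not_isCoprime_of_sylvAux_det hn0 hgdeg hhdeg hdetF
  by_contra hcon
  push_neg at hcon
  rw [Nat.lt_one_iff] at hcon
  have hg0 : g ≠ 0 := by
    intro h0
    rw [h0, natDegree_zero] at hgdeg
    omega
  have hd0 : EuclideanDomain.gcd g h ≠ 0 := by
    intro h0
    exact hg0 (EuclideanDomain.gcd_eq_zero_iff.1 h0).1
  have hdunit : IsUnit (EuclideanDomain.gcd g h) := by
    rw [eq_C_of_natDegree_eq_zero hcon]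
    apply isUnit_C.2
    apply isUnit_iff_ne_zero.2
    intro h0
    apply hd0
    rw [eq_C_of_natDegree_eq_zero hcon, h0, map_zero]
  exact hnotco (EuclideanDomain.gcd_isUnit_iff.1 hdunit)
end
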